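/- arXiv:2010.02743 — 4 statements merged into one kernel-verified Lean document; each statement's English description precedes it below -/
import Mathlib

section
/- Let n ≥ 2, κ > 0, γ ≥ 1, and let Ψ: ((0,∞) × ℝ)^n → ℝ^n be the equal-pressure coupling map defined by Ψ₁(ρ₁,q₁,…,ρ_n,q_n) = Σ_{j=1}^n q_j and Ψ_j(ρ₁,q₁,…,ρ_n,q_n) = p(ρ_j) − p(ρ₁) for j = 2,…,n, with p(ρ) = κρ^γ. Then for every collection of subsonic states (ρ_k, q_k), k = 1,…,n (i.e. ρ_k > 0 and |q_k/ρ_k| < c(ρ_k)), the n×n matrix whose k-th column is D_kΨ(ρ₁,q₁,…,ρ_n,q_n) · r₂(ρ_k,q_k) has nonzero determinant, where D_kΨ denotes the n×2 block of the Jacobian of Ψ with respect to the variables (ρ_k,q_k) and r₂(ρ,q) = (1, q/ρ + c(ρ)). -/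
/-- For the equal-pressure coupling map `Ψ` at a vertex with `n + 2 ≥ 2`
adjacent pipes (`Ψ₁ = Σ q_j`, `Ψ_j = p(ρ_j) − p(ρ₁)` for `j ≥ 2`, `p(ρ) = κρ^γ`),
and any collection of subsonic states `(ρ_k, q_k)`, the `n×n` matrix whose `k`-th
column is `D_kΨ · r₂(ρ_k,q_k)` (the Jacobian block of `Ψ` in the variables
`(ρ_k,q_k)` applied to the second right eigenvector `r₂(ρ,q) = (1, q/ρ + c(ρ))`)
has nonzero determinant. -/
theorem equal_pressure_coupling_nondegenerate
    (n : ℕ) (κ γ : ℝ) (hκ : 0 < κ) (hγ : 1 ≤ γ)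
    (p c : ℝ → ℝ)
    (hp : ∀ r : ℝ, p r = κ * r ^ γ)
    (hc : ∀ r : ℝ, c r = Real.sqrt (κ * γ) * r ^ ((γ - 1) / 2))
    (r₂ : ℝ × ℝ → ℝ × ℝ) (hr₂ : ∀ w : ℝ × ℝ, r₂ w = (1, w.2 / w.1 + c w.1))
    (Ψ : (Fin (n + 2) → ℝ × ℝ) → (Fin (n + 2) → ℝ))
    (hΨ : ∀ w : Fin (n + 2) → ℝ × ℝ, ∀ i : Fin (n + 2),
      Ψ w i = if i = 0 then ∑ j, (w j).2 else p (w i).1 - p (w 0).1)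
    (u : Fin (n + 2) → ℝ × ℝ)
    (hpos : ∀ k, 0 < (u k).1)
    (hsub : ∀ k, |(u k).2 / (u k).1| < c ((u k).1)) :
    Matrix.det (Matrix.of fun i k : Fin (n + 2) =>
      fderiv ℝ Ψ u (Pi.single k (r₂ (u k))) i) ≠ 0 := by
  classical
  -- the derivative coefficients
  set d : Fin (n + 2) → ℝ := fun j => κ * (γ * (u j).1 ^ (γ - 1)) with hd
  have hdpos : ∀ j, 0 < d j := by
    intro j
    exact mul_pos hκ (mul_pos (lt_of_lt_of_le one_pos hγ) (Real.rpow_pos_of_pos (hpos j) _))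
  set a : Fin (n + 2) → ℝ := fun k => (u k).2 / (u k).1 + c ((u k).1) with ha
  have hapos : ∀ k, 0 < a k := by
    intro k
    have := hsub k
    have h1 : -((u k).2 / (u k).1) < c ((u k).1) := (abs_lt.1 this).1 |> neg_lt.mp |> fun h => by
      linarith [(abs_lt.1 this).1]
    simp only [ha]
    linarith [(abs_lt.1 this).1]
  -- the derivative
  set P : Fin (n + 2) → ((Fin (n+2) → ℝ × ℝ) →L[ℝ] ℝ) := fun j =>
    (ContinuousLinearMap.fst ℝ ℝ ℝ).comp (ContinuousLinearMap.proj j) with hP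
  set L : Fin (n + 2) → ((Fin (n+2) → ℝ × ℝ) →L[ℝ] ℝ) := fun i =>
    if i = 0 then ∑ j, (ContinuousLinearMap.snd ℝ ℝ ℝ).comp (ContinuousLinearMap.proj j)
    else d i • P i - d 0 • P 0 with hL
  have hΨeq : Ψ = fun w i => if i = 0 then ∑ j, (w j).2
      else κ * ((w i).1) ^ γ - κ * ((w 0).1) ^ γ := by
    funext w i
    rw [hΨ]
    split <;> simp [hp]
  have hF : HasFDerivAt Ψ (ContinuousLinearMap.pi L) u := by
    rw [hΨeq]
    apply hasFDerivAt_pi.2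
    intro i
    by_cases hi : i = 0
    · subst hi
      simp only [hL, if_pos rfl]
      exact HasFDerivAt.fun_sum fun j _ =>
        ((ContinuousLinearMap.snd ℝ ℝ ℝ).comp
          (ContinuousLinearMap.proj (R := ℝ) (φ := fun _ : Fin (n+2) => ℝ × ℝ) j)).hasFDerivAt
    · simp only [hL, if_neg hi]
      have hterm : ∀ j : Fin (n + 2), HasFDerivAt (fun w : Fin (n+2) → ℝ × ℝ => κ * ((w j).1) ^ γ)
          (d j • P j) u := by
        intro j
        have h1 : HasFDerivAt (fun w : Fin (n+2) → ℝ × ℝ => (w j).1) (P j) u := (P j).hasFDerivAt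
        have h2 : HasDerivAt (fun x : ℝ => x ^ γ) (γ * (u j).1 ^ (γ - 1)) ((u j).1) :=
          Real.hasDerivAt_rpow_const (Or.inr hγ)
        have h3 := h2.comp_hasFDerivAt u h1
        have h4 := h3.const_mul κ
        rw [show d j • P j = κ • (γ * (u j).1 ^ (γ - 1)) • P j by simp [hd, smul_smul]]
        exact h4
      exact (hterm i).sub (hterm 0)
  have hfd : fderiv ℝ Ψ u = ContinuousLinearMap.pi L := hF.fderiv
  -- the matrix entries
  have hentry : ∀ i k : Fin (n + 2),
      fderiv ℝ Ψ u (Pi.single k (r₂ (u k))) i =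
        if i = 0 then a k
        else (if k = i then d i else 0) - (if k = 0 then d 0 else 0) := by
    intro i k
    rw [hfd]
    have hsingle : ∀ j : Fin (n + 2), (Pi.single k (r₂ (u k)) : Fin (n+2) → ℝ × ℝ) j =
        if j = k then (1, a k) else (0 : ℝ × ℝ) := by
      intro j
      rw [Pi.single_apply, hr₂]
    by_cases hi : i = 0
    · subst hi
      have hLi : L 0 = ∑ j, (ContinuousLinearMap.snd ℝ ℝ ℝ).comp
          (ContinuousLinearMap.proj (R := ℝ) (φ := fun _ : Fin (n+2) => ℝ × ℝ) j) := by
        simp [hL]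
      rw [ContinuousLinearMap.pi_apply, hLi, if_pos rfl, ContinuousLinearMap.sum_apply]
      simp only [ContinuousLinearMap.comp_apply, ContinuousLinearMap.proj_apply,
        ContinuousLinearMap.coe_snd']
      rw [Finset.sum_congr rfl fun j _ => by rw [hsingle j]]
      simp [apply_ite Prod.snd]
    · have hLi : L i = d i • P i - d 0 • P 0 := by simp [hL, hi]
      rw [ContinuousLinearMap.pi_apply, hLi, if_neg hi]
      simp only [ContinuousLinearMap.sub_apply, ContinuousLinearMap.smul_apply, hP,
        ContinuousLinearMap.comp_apply, ContinuousLinearMap.proj_apply,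
        ContinuousLinearMap.coe_fst', smul_eq_mul]
      rw [hsingle i, hsingle 0]
      have hif : ∀ (x y : Fin (n + 2)) (cval : ℝ),
          (if x = y then cval else 0) = (if y = x then cval else 0) := by
        intro x y cval
        by_cases h : x = y
        · simp [h]
        · simp [h, Ne.symm h]
      rw [hif k i (d i), hif k 0 (d 0)]
      split_ifs <;> simp
  -- rewrite the matrix
  have hM : (Matrix.of fun i k : Fin (n + 2) =>
      fderiv ℝ Ψ u (Pi.single k (r₂ (u k))) i) =
      Matrix.of fun i k : Fin (n + 2) =>
        if i = 0 then a k
        else (if k = i then d i else 0) - (if k = 0 then d 0 else 0) := by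
    ext i k
    exact hentry i k
  rw [hM]
  -- determinant nonzero via trivial kernel
  intro hdet
  obtain ⟨v, hv, hmv⟩ := (Matrix.exists_mulVec_eq_zero_iff).2 hdet
  have hrow : ∀ i : Fin (n + 2), i ≠ 0 → d i * v i - d 0 * v 0 = 0 := by
    intro i hi
    have := congrFun hmv i
    simp only [Matrix.mulVec, dotProduct, Matrix.of_apply, if_neg hi,
      Pi.zero_apply] at this
    rw [Finset.sum_congr rfl fun k _ => sub_mul _ _ (v k)] at this
    rw [Finset.sum_sub_distrib] at this
    simpa [Finset.sum_ite_eq, Finset.sum_ite_eq'] using this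
  have hvk : ∀ k : Fin (n + 2), v k = d 0 / d k * v 0 := by
    intro k
    by_cases hk : k = 0
    · subst hk; rw [div_self (hdpos 0).ne', one_mul]
    · have h := hrow k hk
      rw [div_mul_eq_mul_div, eq_div_iff (hdpos k).ne']
      linarith [mul_comm (v k) (d k)]
  have hrow0 : (∑ k : Fin (n + 2), a k * (d 0 / d k)) * v 0 = 0 := by
    have h0 := congrFun hmv 0
    simp only [Matrix.mulVec, dotProduct, Matrix.of_apply, if_pos rfl,
      Pi.zero_apply] at h0
    calc (∑ k : Fin (n + 2), a k * (d 0 / d k)) * v 0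
        = ∑ k : Fin (n + 2), a k * v k := by
          rw [Finset.sum_mul]
          exact Finset.sum_congr rfl fun k _ => by rw [hvk k]; ring
      _ = 0 := h0
  have hspos : 0 < ∑ k : Fin (n + 2), a k * (d 0 / d k) := by
    apply Finset.sum_pos
    · intro k _
      exact mul_pos (hapos k) (div_pos (hdpos 0) (hdpos k))
    · exact Finset.univ_nonempty
  have hv0 : v 0 = 0 := by
    rcases mul_eq_zero.1 hrow0 with h | h
    · exact absurd h (ne_of_gt hspos)
    · exact h
  apply hv
  funext k
  rw [hvk k, hv0, mul_zero]
  rfl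
end

section
/- Let n ≥ 2, κ > 0, γ ≥ 1, and let Ψ: ((0,∞) × ℝ)^n → ℝ^n be the equal-dynamic-pressure coupling map defined by Ψ₁(ρ₁,q₁,…,ρ_n,q_n) = Σ_{j=1}^n q_j and Ψ_j(ρ₁,q₁,…,ρ_n,q_n) = (q_j²/ρ_j + p(ρ_j)) − (q₁²/ρ₁ + p(ρ₁)) for j = 2,…,n, with p(ρ) = κρ^γ. Then for every collection of subsonic states (ρ_k, q_k), k = 1,…,n (i.e. ρ_k > 0 and |q_k/ρ_k| < c(ρ_k)), the n×n matrix whose k-th column is D_kΨ(ρ₁,q₁,…,ρ_n,q_n) · r₂(ρ_k,q_k) has nonzero determinant, where D_kΨ denotes the n×2 block of the Jacobian of Ψ with respect to the variables (ρ_k,q_k) and r₂(ρ,q) = (1, q/ρ + c(ρ)). -/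
set_option maxHeartbeats 1000000

open ContinuousLinearMap in
private lemma edp_hasFDerivAt_F (κ γ : ℝ) (hγ : 1 ≤ γ) (w : ℝ × ℝ) (hw : 0 < w.1) :
    HasFDerivAt (fun x : ℝ × ℝ => x.2 ^ 2 / x.1 + κ * x.1 ^ γ)
      ((κ * γ * w.1 ^ (γ - 1) - w.2 ^ 2 / w.1 ^ 2) • (fst ℝ ℝ ℝ)
        + (2 * w.2 / w.1) • (snd ℝ ℝ ℝ)) w := by
  have h1 := (hasDerivAt_pow 2 w.2).comp_hasFDerivAt w
      (hasFDerivAt_snd : HasFDerivAt _ (snd ℝ ℝ ℝ) w)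
  have hinv := (hasDerivAt_inv hw.ne').comp_hasFDerivAt w
      (hasFDerivAt_fst : HasFDerivAt _ (fst ℝ ℝ ℝ) w)
  simp only [Function.comp_def] at h1 hinv
  have h2 := h1.mul hinv
  have h3 := ((hasFDerivAt_fst : HasFDerivAt _ (fst ℝ ℝ ℝ) w).rpow_const
      (p := γ) (Or.inr hγ)).const_mul κ
  have h4 := h2.add h3
  have hfeq : (fun x : ℝ × ℝ => x.2 ^ 2 * (x.1)⁻¹ + κ * x.1 ^ γ)
      = (fun x : ℝ × ℝ => x.2 ^ 2 / x.1 + κ * x.1 ^ γ) := by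
    funext x; rw [div_eq_mul_inv]
  replace h4 : HasFDerivAt (fun x : ℝ × ℝ => x.2 ^ 2 * (x.1)⁻¹ + κ * x.1 ^ γ) _ w := h4
  rw [hfeq] at h4
  refine h4.congr_fderiv ?_
  refine ContinuousLinearMap.ext fun v => ?_
  simp
  field_simp
  ring

/-- For the equal-dynamic-pressure coupling map `Ψ` at a vertex with
`n + 2 ≥ 2` adjacent pipes (`Ψ₁ = Σ q_j`, `Ψ_j = (q_j²/ρ_j + p(ρ_j)) − (q₁²/ρ₁ + p(ρ₁))`
for `j ≥ 2`, `p(ρ) = κρ^γ`), and any collection of subsonic states `(ρ_k, q_k)`,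
the `n×n` matrix whose `k`-th column is `D_kΨ · r₂(ρ_k,q_k)` (the Jacobian block of
`Ψ` in the variables `(ρ_k,q_k)` applied to the second right eigenvector
`r₂(ρ,q) = (1, q/ρ + c(ρ))`) has nonzero determinant. -/
theorem equal_dynamic_pressure_coupling_nondegenerate
    (n : ℕ) (κ γ : ℝ) (hκ : 0 < κ) (hγ : 1 ≤ γ)
    (p c : ℝ → ℝ)
    (hp : ∀ r : ℝ, p r = κ * r ^ γ)
    (hc : ∀ r : ℝ, c r = Real.sqrt (κ * γ) * r ^ ((γ - 1) / 2))
    (r₂ : ℝ × ℝ → ℝ × ℝ) (hr₂ : ∀ w : ℝ × ℝ, r₂ w = (1, w.2 / w.1 + c w.1))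
    (Ψ : (Fin (n + 2) → ℝ × ℝ) → (Fin (n + 2) → ℝ))
    (hΨ : ∀ w : Fin (n + 2) → ℝ × ℝ, ∀ i : Fin (n + 2),
      Ψ w i = if i = 0 then ∑ j, (w j).2
        else ((w i).2 ^ 2 / (w i).1 + p (w i).1) - ((w 0).2 ^ 2 / (w 0).1 + p (w 0).1))
    (u : Fin (n + 2) → ℝ × ℝ)
    (hpos : ∀ k, 0 < (u k).1)
    (hsub : ∀ k, |(u k).2 / (u k).1| < c ((u k).1)) :
    Matrix.det (Matrix.of fun i k : Fin (n + 2) =>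
      fderiv ℝ Ψ u (Pi.single k (r₂ (u k))) i) ≠ 0 := by
  classical
  set a : Fin (n + 2) → ℝ := fun k => (u k).2 / (u k).1 + c ((u k).1) with ha
  have hapos : ∀ k, 0 < a k := by
    intro k
    have h := (abs_lt.mp (hsub k)).1
    simp only [ha]
    linarith
  have hr₂u : ∀ k, r₂ (u k) = (1, a k) := by
    intro k; simp [hr₂, ha]
  set F : ℝ × ℝ → ℝ := fun x => x.2 ^ 2 / x.1 + κ * x.1 ^ γ with hFdef
  set D : Fin (n + 2) → (ℝ × ℝ →L[ℝ] ℝ) := fun k =>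
    (κ * γ * (u k).1 ^ (γ - 1) - (u k).2 ^ 2 / (u k).1 ^ 2) • (ContinuousLinearMap.fst ℝ ℝ ℝ)
      + (2 * (u k).2 / (u k).1) • (ContinuousLinearMap.snd ℝ ℝ ℝ) with hDdef
  have hF : ∀ k, HasFDerivAt F (D k) (u k) := fun k =>
    edp_hasFDerivAt_F κ γ hγ (u k) (hpos k)
  set L : Fin (n + 2) → ((Fin (n + 2) → ℝ × ℝ) →L[ℝ] ℝ) := fun i =>
    if i = 0 then
      ∑ j, (ContinuousLinearMap.snd ℝ ℝ ℝ).comp (ContinuousLinearMap.proj j)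
    else (D i).comp (ContinuousLinearMap.proj i) - (D 0).comp (ContinuousLinearMap.proj 0)
    with hLdef
  have hΨeq : Ψ = fun w i => if i = 0 then ∑ j, (w j).2 else F (w i) - F (w 0) := by
    funext w i
    rw [hΨ]
    simp only [hFdef, hp]
  have hfd : HasFDerivAt Ψ (ContinuousLinearMap.pi L) u := by
    rw [hΨeq]
    refine hasFDerivAt_pi.2 fun i => ?_
    by_cases hi : i = 0
    · subst hi
      simp only [hLdef, if_pos rfl]
      have hfun : ⇑(∑ j : Fin (n + 2),
          (ContinuousLinearMap.snd ℝ ℝ ℝ).comp (ContinuousLinearMap.proj j))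
          = fun w : Fin (n + 2) → ℝ × ℝ => ∑ j, (w j).2 := by
        funext w; simp
      have h := (∑ j : Fin (n + 2),
          (ContinuousLinearMap.snd ℝ ℝ ℝ).comp
            (ContinuousLinearMap.proj (R := ℝ) (φ := fun _ : Fin (n+2) => ℝ × ℝ) j)).hasFDerivAt
            (x := u)
      rw [hfun] at h
      simpa using h
    · simp only [hLdef, if_neg hi]
      have h := (((hF i).comp u (hasFDerivAt_apply i u)).sub
        (HasFDerivAt.comp (g := F) (f := fun f : Fin (n+2) → ℝ × ℝ => f 0) u (hF 0)
          (hasFDerivAt_apply (𝕜 := ℝ) (0 : Fin (n + 2)) u)))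
      exact h
  have hDval : ∀ k, D k (1, a k) = a k ^ 2 := by
    intro k
    have hc2 : c ((u k).1) ^ 2 = κ * γ * (u k).1 ^ (γ - 1) := by
      rw [hc, mul_pow, Real.sq_sqrt (mul_nonneg hκ.le (by linarith))]
      congr 1
      rw [← Real.rpow_natCast ((u k).1 ^ ((γ - 1) / 2)) 2, ← Real.rpow_mul (hpos k).le]
      norm_num
    have hρ : (u k).1 ≠ 0 := (hpos k).ne'
    simp only [hDdef, ContinuousLinearMap.add_apply, ContinuousLinearMap.smul_apply,
      ContinuousLinearMap.coe_fst', ContinuousLinearMap.coe_snd', smul_eq_mul, ha]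
    rw [← hc2]
    field_simp
    ring
  have hM : (Matrix.of fun i k : Fin (n + 2) =>
        fderiv ℝ Ψ u (Pi.single k (r₂ (u k))) i)
      = Matrix.of (fun i k : Fin (n + 2) =>
        if i = 0 then a k else if k = i then a i ^ 2
          else if k = 0 then -(a 0 ^ 2) else 0) := by
    ext i k
    rw [hfd.fderiv]
    have hsingle : ∀ j : Fin (n + 2),
        (Pi.single k (r₂ (u k)) : ∀ _ : Fin (n + 2), ℝ × ℝ) j
          = if j = k then ((1 : ℝ), a k) else 0 := by
      intro j
      rw [hr₂u, Pi.single_apply]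
    simp only [Matrix.of_apply, ContinuousLinearMap.pi_apply]
    by_cases hi : i = 0
    · subst hi
      simp only [hLdef, if_pos rfl, ContinuousLinearMap.sum_apply,
        ContinuousLinearMap.comp_apply, ContinuousLinearMap.proj_apply,
        ContinuousLinearMap.coe_snd']
      rw [Finset.sum_congr rfl fun j _ => by rw [hsingle j]]
      simp [apply_ite Prod.snd, Finset.sum_ite_eq']
    · simp only [hLdef, if_neg hi, ContinuousLinearMap.sub_apply,
        ContinuousLinearMap.comp_apply, ContinuousLinearMap.proj_apply]
      rw [hsingle i, hsingle 0]
      by_cases hk : k = i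
      · subst hk
        have h0k : (0 : Fin (n + 2)) ≠ k := fun h => hi h.symm
        simp [hi, h0k, hDval k]
      · by_cases hk0 : k = 0
        · subst hk0
          have hik : i ≠ (0 : Fin (n + 2)) := hi
          simp [hi, hk, hik, hDval 0]
        · have h1 : i ≠ k := fun h => hk h.symm
          have h2 : (0 : Fin (n + 2)) ≠ k := fun h => hk0 h.symm
          simp [hi, hk, hk0, h1, h2]
  rw [hM]
  intro hdet
  obtain ⟨x, hx0, hxv⟩ := Matrix.exists_mulVec_eq_zero_iff.mpr hdet
  have hxi : ∀ i : Fin (n + 2), i ≠ 0 → a i ^ 2 * x i = a 0 ^ 2 * x 0 := by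
    intro i hi
    have h := congrFun hxv i
    simp only [Matrix.mulVec, dotProduct, Matrix.of_apply, if_neg hi,
      Pi.zero_apply] at h
    rw [Finset.sum_congr rfl (fun k _ => show
        (if k = i then a i ^ 2 else if k = 0 then -(a 0 ^ 2) else 0) * x k
          = (if k = i then a i ^ 2 * x k else 0)
            + (if k = 0 then -(a 0 ^ 2) * x k else 0) from by
      by_cases h1 : k = i
      · subst h1; rw [if_pos rfl, if_pos rfl, if_neg hi, add_zero]
      · by_cases h2 : k = 0
        · subst h2; rw [if_neg h1, if_pos rfl, if_neg h1, if_pos rfl, zero_add]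
        · rw [if_neg h1, if_neg h2, if_neg h1, if_neg h2, zero_mul, add_zero])] at h
    rw [Finset.sum_add_distrib, Finset.sum_ite_eq' Finset.univ i,
      Finset.sum_ite_eq' Finset.univ 0] at h
    simp only [Finset.mem_univ, if_pos] at h
    linarith
  have h0 : ∑ k, a k * x k = 0 := by
    have h := congrFun hxv 0
    simpa [Matrix.mulVec, dotProduct] using h
  have hterm : ∀ k, a k * x k = a 0 ^ 2 * x 0 / a k := by
    intro k
    rcases eq_or_ne k 0 with rfl | hk
    · have ha0 := (hapos 0).ne'
      field_simp
    · have h := hxi k hk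
      have hak := (hapos k).ne'
      field_simp
      nlinarith [h]
  rw [Finset.sum_congr rfl fun k _ => hterm k] at h0
  have hsum : ∑ k : Fin (n + 2), a 0 ^ 2 * x 0 / a k
      = a 0 ^ 2 * x 0 * ∑ k : Fin (n + 2), (a k)⁻¹ := by
    rw [Finset.mul_sum]
    exact Finset.sum_congr rfl fun k _ => div_eq_mul_inv _ _
  rw [hsum] at h0
  have hS : 0 < ∑ k : Fin (n + 2), (a k)⁻¹ :=
    Finset.sum_pos (fun k _ => inv_pos.2 (hapos k)) Finset.univ_nonempty
  have hx00 : x 0 = 0 := by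
    have ha0 := (hapos 0).ne'
    rcases mul_eq_zero.mp h0 with h | h
    · rcases mul_eq_zero.mp h with h' | h'
      · exact absurd h' (pow_ne_zero 2 ha0)
      · exact h'
    · exact absurd h hS.ne'
  apply hx0
  funext k
  rcases eq_or_ne k 0 with rfl | hk
  · exact hx00
  · have h := hxi k hk
    rw [hx00, mul_zero] at h
    have := (pow_ne_zero 2 (hapos k).ne')
    exact (mul_eq_zero.mp h).elim (fun h' => absurd h' this) id
end

section
/- Let n ≥ 2, κ > 0, γ > 1, and let Ψ: ((0,∞) × ℝ)^n → ℝ^n be the equal-Bernoulli-invariant coupling map defined by Ψ₁(ρ₁,q₁,…,ρ_n,q_n) = Σ_{j=1}^n q_j and Ψ_j(ρ₁,q₁,…,ρ_n,q_n) = (½ (q_j/ρ_j)² + h(ρ_j)) − (½ (q₁/ρ₁)² + h(ρ₁)) for j = 2,…,n, where h(ρ) = κγ/(γ−1) ρ^{γ−1} is the specific enthalpy (so h'(ρ) = p'(ρ)/ρ for p(ρ) = κρ^γ). Then for every collection of subsonic states (ρ_k, q_k), k = 1,…,n (i.e. ρ_k > 0 and |q_k/ρ_k| < c(ρ_k)),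 the n×n matrix whose k-th column is D_kΨ(ρ₁,q₁,…,ρ_n,q_n) · r₂(ρ_k,q_k) has nonzero determinant, where D_kΨ denotes the n×2 block of the Jacobian of Ψ with respect to the variables (ρ_k,q_k) and r₂(ρ,q) = (1, q/ρ + c(ρ)). -/
lemma auxB (κ γ : ℝ) (hγ : 1 < γ) (ρ q : ℝ) (hρ : 0 < ρ) :
    ∃ L : ℝ × ℝ →L[ℝ] ℝ,
      HasFDerivAt (fun p : ℝ × ℝ => 1/2 * (p.2 / p.1)^2 + κ*γ/(γ-1) * p.1 ^ (γ-1)) L (ρ, q) ∧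
      ∀ x y : ℝ, L (x, y) = (κ*γ*ρ^(γ-2) - q^2/ρ^3) * x + q/ρ^2 * y := by
  have hρ0 : ρ ≠ 0 := hρ.ne'
  have hγ1 : γ - 1 ≠ 0 := by intro hcon; linarith
  have h2 : HasFDerivAt (fun p : ℝ×ℝ => (p.1)⁻¹)
      ((-(ρ^2)⁻¹) • ContinuousLinearMap.fst ℝ ℝ ℝ) (ρ, q) :=
    (hasDerivAt_inv hρ0).comp_hasFDerivAt (ρ,q) hasFDerivAt_fst
  have hv : HasFDerivAt (fun p : ℝ×ℝ => p.2 * (p.1)⁻¹)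
      ((q : ℝ) • ((-(ρ^2)⁻¹) • ContinuousLinearMap.fst ℝ ℝ ℝ)
        + (ρ⁻¹ : ℝ) • ContinuousLinearMap.snd ℝ ℝ ℝ) (ρ, q) :=
    hasFDerivAt_snd.mul h2
  have hsq := hv.mul hv
  have hterm1 := hsq.const_mul (1/2 : ℝ)
  have hpow : HasFDerivAt (fun p : ℝ×ℝ => κ*γ/(γ-1) * p.1 ^ (γ-1))
      (((κ*γ/(γ-1)) * ((γ-1) * ρ^(γ-1-1))) • ContinuousLinearMap.fst ℝ ℝ ℝ) (ρ,q) := by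
    have h1 : HasDerivAt (fun x : ℝ => κ*γ/(γ-1) * x ^ (γ-1))
        ((κ*γ/(γ-1)) * ((γ-1) * ρ^(γ-1-1))) ρ :=
      (Real.hasDerivAt_rpow_const (Or.inl hρ0)).const_mul _
    have := h1.comp_hasFDerivAt (ρ,q) (hasFDerivAt_fst : HasFDerivAt (Prod.fst : ℝ×ℝ → ℝ) (ContinuousLinearMap.fst ℝ ℝ ℝ) (ρ,q)); exact this
  have key : (fun p : ℝ×ℝ => 1/2*(p.2/p.1)^2 + κ*γ/(γ-1)*p.1^(γ-1))
      = (fun p : ℝ×ℝ => 1/2*((p.2*(p.1)⁻¹)*(p.2*(p.1)⁻¹)) + κ*γ/(γ-1)*p.1^(γ-1)) := by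
    funext p; simp only [div_eq_mul_inv, pow_two]
  refine ⟨_, key ▸ (show HasFDerivAt (fun p : ℝ×ℝ => 1/2*((p.2*(p.1)⁻¹)*(p.2*(p.1)⁻¹)) + κ*γ/(γ-1)*p.1^(γ-1)) _ (ρ,q) from hterm1.add hpow), ?_⟩
  intro x y
  have he : γ - 1 - 1 = γ - 2 := by ring
  simp only [ContinuousLinearMap.add_apply, ContinuousLinearMap.smul_apply,
    ContinuousLinearMap.coe_fst', ContinuousLinearMap.coe_snd', smul_eq_mul, he]
  field_simp
  ring

lemma det_aux (m : ℕ) (a d : Fin (m+2) → ℝ) (ha : ∀ k, 0 < a k) (hd : ∀ k, 0 < d k) :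
    (Matrix.of fun i k : Fin (m+2) =>
      if i = 0 then a k else (if i = k then d i else 0) - (if k = 0 then d 0 else 0)).det ≠ 0 := by
  intro hdet
  obtain ⟨x, hx0, hxv⟩ := Matrix.exists_mulVec_eq_zero_iff.mpr hdet
  have hrow : ∀ i, ∑ k, (if i = 0 then a k else
      (if i = k then d i else 0) - (if k = 0 then d 0 else 0)) * x k = 0 := by
    intro i
    have := congrFun hxv i
    simpa [Matrix.mulVec, dotProduct] using this
  have hxk : ∀ k, x k = d 0 * x 0 / d k := by
    intro k
    by_cases hk : k = 0
    · subst hk; field_simp [(hd 0).ne']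
    · have h1 := hrow k
      rw [Finset.sum_congr rfl (fun j _ => by rw [if_neg hk])] at h1
      simp only [sub_mul, Finset.sum_sub_distrib, ite_mul, zero_mul,
        Finset.sum_ite_eq, Finset.mem_univ, if_true] at h1
      rw [Finset.sum_ite_eq' Finset.univ (0 : Fin (m+2)) (fun j => d 0 * x j),
        if_pos (Finset.mem_univ _)] at h1
      field_simp [(hd k).ne']
      linarith
  have h0 := hrow 0
  simp only [eq_self_iff_true, if_true] at h0
  have hsum : ∑ k, a k * x k = (d 0 * x 0) * ∑ k, a k / d k := by
    rw [Finset.mul_sum]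
    refine Finset.sum_congr rfl fun k _ => ?_
    rw [hxk k]
    field_simp
  have hS : 0 < ∑ k : Fin (m+2), a k / d k :=
    Finset.sum_pos (fun k _ => div_pos (ha k) (hd k)) ⟨0, Finset.mem_univ _⟩
  rw [hsum] at h0
  have hx00 : x 0 = 0 := by
    rcases mul_eq_zero.mp h0 with h | h
    · rcases mul_eq_zero.mp h with h' | h'
      · exact absurd h' (hd 0).ne'
      · exact h'
    · exact absurd h hS.ne'
  apply hx0
  funext k
  rw [hxk k, hx00]
  simp


/-- For the equal-Bernoulli-invariant coupling map `Ψ` at a vertex with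
`n + 2 ≥ 2` adjacent pipes (`Ψ₁ = Σ q_j`,
`Ψ_j = (½(q_j/ρ_j)² + h(ρ_j)) − (½(q₁/ρ₁)² + h(ρ₁))` for `j ≥ 2`, with specific
enthalpy `h(ρ) = κγ/(γ−1) ρ^{γ−1}`, `γ > 1`), and any collection of subsonic states
`(ρ_k, q_k)`, the `n×n` matrix whose `k`-th column is `D_kΨ · r₂(ρ_k,q_k)`
(the Jacobian block of `Ψ` in the variables `(ρ_k,q_k)` applied to the second right
eigenvector `r₂(ρ,q) = (1, q/ρ + c(ρ))`) has nonzero determinant. -/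
theorem equal_bernoulli_coupling_nondegenerate
    (n : ℕ) (κ γ : ℝ) (hκ : 0 < κ) (hγ : 1 < γ)
    (h c : ℝ → ℝ)
    (hh : ∀ r : ℝ, h r = κ * γ / (γ - 1) * r ^ (γ - 1))
    (hc : ∀ r : ℝ, c r = Real.sqrt (κ * γ) * r ^ ((γ - 1) / 2))
    (r₂ : ℝ × ℝ → ℝ × ℝ) (hr₂ : ∀ w : ℝ × ℝ, r₂ w = (1, w.2 / w.1 + c w.1))
    (Ψ : (Fin (n + 2) → ℝ × ℝ) → (Fin (n + 2) → ℝ))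
    (hΨ : ∀ w : Fin (n + 2) → ℝ × ℝ, ∀ i : Fin (n + 2),
      Ψ w i = if i = 0 then ∑ j, (w j).2
        else ((1 / 2) * ((w i).2 / (w i).1) ^ 2 + h (w i).1)
          - ((1 / 2) * ((w 0).2 / (w 0).1) ^ 2 + h (w 0).1))
    (u : Fin (n + 2) → ℝ × ℝ)
    (hpos : ∀ k, 0 < (u k).1)
    (hsub : ∀ k, |(u k).2 / (u k).1| < c ((u k).1)) :
    Matrix.det (Matrix.of fun i k : Fin (n + 2) =>
      fderiv ℝ Ψ u (Pi.single k (r₂ (u k))) i) ≠ 0 := by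
  classical
  have hcpos : ∀ k, 0 < c ((u k).1) := fun k => (abs_nonneg _).trans_lt (hsub k)
  set a : Fin (n + 2) → ℝ := fun k => (u k).2 / (u k).1 + c ((u k).1) with ha_def
  have hapos : ∀ k, 0 < a k := by
    intro k
    have := (abs_lt.mp (hsub k)).1
    simp only [ha_def]
    linarith
  set d : Fin (n + 2) → ℝ := fun k => c ((u k).1) * a k / (u k).1 with hd_def
  have hdpos : ∀ k, 0 < d k :=
    fun k => div_pos (mul_pos (hcpos k) (hapos k)) (hpos k)
  -- derivative of the Bernoulli part at each u k
  have hB : ∀ k, ∃ L : ℝ × ℝ →L[ℝ] ℝ,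
      HasFDerivAt (fun p : ℝ × ℝ => 1/2 * (p.2 / p.1)^2 + h p.1) L (u k) ∧
      ∀ x y : ℝ, L (x, y) = (κ*γ*(u k).1^(γ-2) - (u k).2^2/(u k).1^3) * x
        + (u k).2/(u k).1^2 * y := by
    intro k
    obtain ⟨L, hL, hLv⟩ := auxB κ γ hγ (u k).1 (u k).2 (hpos k)
    refine ⟨L, ?_, hLv⟩
    have : (fun p : ℝ × ℝ => 1/2 * (p.2 / p.1)^2 + h p.1)
        = fun p : ℝ × ℝ => 1/2 * (p.2 / p.1)^2 + κ*γ/(γ-1) * p.1 ^ (γ-1) := by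
      funext p; rw [hh]
    rw [this]
    exact hL
  choose L hL1 hL2 using hB
  have hLd : ∀ k, L k (r₂ (u k)) = d k := by
    intro k
    rw [hr₂]
    have hv := hL2 k 1 ((u k).2 / (u k).1 + c ((u k).1))
    rw [hv]
    have hρ0 : (u k).1 ≠ 0 := (hpos k).ne'
    have hcc2 : c ((u k).1) ^ 2 = κ * γ * (u k).1 ^ (γ - 1) := by
      rw [hc, mul_pow, Real.sq_sqrt (mul_pos hκ (lt_trans zero_lt_one hγ)).le,
        ← Real.rpow_natCast ((u k).1 ^ ((γ - 1) / 2)) 2, ← Real.rpow_mul (hpos k).le]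
      norm_num
    have hrp : κ * γ * (u k).1 ^ (γ - 2) = c ((u k).1) ^ 2 / (u k).1 := by
      rw [show γ - 2 = (γ - 1) - 1 by ring, Real.rpow_sub (hpos k), Real.rpow_one, hcc2]
      ring
    rw [hrp]
    simp only [hd_def, ha_def]
    field_simp
    ring
  -- total derivative of Ψ
  set L0 : (Fin (n + 2) → ℝ × ℝ) →L[ℝ] ℝ :=
    ∑ j, (ContinuousLinearMap.snd ℝ ℝ ℝ).comp (ContinuousLinearMap.proj j) with hL0_def
  set Li : Fin (n + 2) → ((Fin (n + 2) → ℝ × ℝ) →L[ℝ] ℝ) := fun i =>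
    if i = 0 then L0
    else (L i).comp (ContinuousLinearMap.proj i) - (L 0).comp (ContinuousLinearMap.proj 0)
    with hLi_def
  have hDer : HasFDerivAt Ψ (ContinuousLinearMap.pi Li) u := by
    have hΨeq : Ψ = fun w i => if i = 0 then ∑ j, (w j).2
        else ((1 / 2) * ((w i).2 / (w i).1) ^ 2 + h (w i).1)
          - ((1 / 2) * ((w 0).2 / (w 0).1) ^ 2 + h (w 0).1) := by
      funext w i; exact hΨ w i
    rw [hΨeq]
    apply hasFDerivAt_pi''
    intro i
    rw [ContinuousLinearMap.proj_pi]
    by_cases hi : i = 0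
    · subst hi
      simp only [hLi_def, if_pos rfl]
      have : HasFDerivAt (fun w : Fin (n + 2) → ℝ × ℝ => ∑ j, (w j).2) L0 u := by
        rw [hL0_def]
        exact HasFDerivAt.fun_sum fun j _ => (hasFDerivAt_apply j u).snd
      simpa using this
    · simp only [hLi_def, if_neg hi]
      have h1 : HasFDerivAt (fun w : Fin (n + 2) → ℝ × ℝ =>
          (1 / 2) * ((w i).2 / (w i).1) ^ 2 + h (w i).1)
          ((L i).comp (ContinuousLinearMap.proj i)) u :=
        by have := (hL1 i).comp (f := fun w => w i) u (hasFDerivAt_apply i u); exact this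
      have h0 : HasFDerivAt (fun w : Fin (n + 2) → ℝ × ℝ =>
          (1 / 2) * ((w 0).2 / (w 0).1) ^ 2 + h (w 0).1)
          ((L 0).comp (ContinuousLinearMap.proj 0)) u :=
        by have := (hL1 0).comp (f := fun w => w 0) u (hasFDerivAt_apply 0 u); exact this
      have := h1.sub h0
      simpa [hi, Pi.sub_def] using this
  have hfd : fderiv ℝ Ψ u = ContinuousLinearMap.pi Li := hDer.fderiv
  have hM : ∀ i k : Fin (n + 2), fderiv ℝ Ψ u (Pi.single k (r₂ (u k))) i
      = if i = 0 then a k else (if i = k then d i else 0) - (if k = 0 then d 0 else 0) := by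
    intro i k
    rw [hfd]
    simp only [ContinuousLinearMap.pi_apply]
    by_cases hi : i = 0
    · subst hi
      simp only [hLi_def, if_pos rfl, hL0_def, ContinuousLinearMap.sum_apply,
        ContinuousLinearMap.comp_apply, ContinuousLinearMap.proj_apply,
        ContinuousLinearMap.coe_snd', Pi.single_apply, apply_ite Prod.snd,
        Prod.snd_zero, Finset.sum_ite_eq', Finset.mem_univ, if_true]
      rw [hr₂]
    · simp only [hLi_def, if_neg hi, ContinuousLinearMap.sub_apply,
        ContinuousLinearMap.comp_apply, ContinuousLinearMap.proj_apply, Pi.single_apply]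
      by_cases hik : i = k
      · subst hik
        have h0i : ¬ ((0 : Fin (n + 2)) = i) := fun hcon => hi hcon.symm
        simp [h0i, hi, hLd i]
      · by_cases hk0 : k = 0
        · subst hk0
          simp [hik, hLd 0]
        · have h0k : ¬ ((0 : Fin (n + 2)) = k) := fun hcon => hk0 hcon.symm
          simp [hik, hk0, h0k]
  have hMat : (Matrix.of fun i k : Fin (n + 2) =>
      fderiv ℝ Ψ u (Pi.single k (r₂ (u k))) i)
      = Matrix.of (fun i k : Fin (n + 2) =>
        if i = 0 then a k else (if i = k then d i else 0) - (if k = 0 then d 0 else 0)) := by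
    ext i k
    simp only [Matrix.of_apply]
    exact hM i k
  rw [hMat]
  exact det_aux n a d hapos hdpos
end

section
/- Let d ≥ 1, N ≥ 0, Δx = 1/(N+1), Δt > 0, and for j = 1,…,d let λ_j > 0 satisfy the CFL condition λ_j Δt/Δx ≤ 1, let κ_j ∈ (0,1), and let μ_j satisfy 0 < μ_j ≤ ln(1/κ_j). Let the numbers U_{j,i}^m for j = 1,…,d, i = −1,0,…,N, m ≥ 0 satisfy the upwind scheme U_{j,i}^{m+1} = U_{j,i}^m − (λ_j Δt/Δx)(U_{j,i}^m − U_{j,i−1}^m) for all i = 0,…,N and m ≥ 0, together with the linear feedback boundary condition U_{j,−1}^m = κ_j U_{j,N}^m for all m ≥ 0. Define the discrete Lyapunov function L^m = Δx Σ_{i=0}^N Σ_{j=1}^d (U_{j,i}^m)² exp(−μ_j i Δx). Then L^m decays exponentially: L^m ≤ exp(−ν t^m) L^0 for all m ≥ 0, where t^m = m Δt and ν = min_{j=1,…,d} (λ_j μ_j exp(−μ_j Δx) / 2). -/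
set_option maxHeartbeats 1000000 in
/-- Exponential decay of the discrete exponentially weighted Lyapunov
function for the upwind discretization of the linear diagonal hyperbolic system
`∂_t u_j + λ_j ∂_x u_j = 0` on `[0,1]` with boundary feedback `u_j(t,0) = κ_j u_j(t,1)`.
The number of components is `d + 1 ≥ 1`; cells are `i = 0,…,N` of size `Δx = 1/(N+1)`,
with ghost cell `i = −1` implementing the feedback. -/
theorem discrete_lyapunov_exponential_decay
    (d N : ℕ) (Δt : ℝ) (hΔt : 0 < Δt)
    (lam kap mu : Fin (d + 1) → ℝ)
    (hlam : ∀ j, 0 < lam j)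
    (Δx : ℝ) (hΔx : Δx = 1 / (N + 1))
    (hCFL : ∀ j, lam j * Δt / Δx ≤ 1)
    (hkap : ∀ j, kap j ∈ Set.Ioo (0 : ℝ) 1)
    (hmu : ∀ j, 0 < mu j ∧ mu j ≤ Real.log (1 / kap j))
    (U : Fin (d + 1) → ℤ → ℕ → ℝ)
    (hscheme : ∀ j, ∀ i : ℤ, 0 ≤ i → i ≤ (N : ℤ) → ∀ m : ℕ,
      U j i (m + 1) = U j i m - (lam j * Δt / Δx) * (U j i m - U j (i - 1) m))
    (hbc : ∀ j, ∀ m : ℕ, U j (-1) m = kap j * U j (N : ℤ) m)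
    (L : ℕ → ℝ)
    (hL : ∀ m : ℕ, L m = Δx * ∑ i ∈ Finset.range (N + 1), ∑ j,
      (U j (i : ℤ) m) ^ 2 * Real.exp (-(mu j) * ((i : ℝ) * Δx)))
    (ν : ℝ)
    (hν : ν = Finset.univ.inf' Finset.univ_nonempty
      (fun j => lam j * mu j * Real.exp (-(mu j) * Δx) / 2)) :
    ∀ m : ℕ, L m ≤ Real.exp (-ν * ((m : ℝ) * Δt)) * L 0 := by
  have hΔxpos : 0 < Δx := by
    rw [hΔx]; positivity
  have hNx : ((N : ℝ) + 1) * Δx = 1 := by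
    rw [hΔx]; field_simp
  set w : Fin (d + 1) → ℕ → ℝ :=
    fun j i => Real.exp (-(mu j) * ((i : ℝ) * Δx)) with hwdef
  set S : Fin (d + 1) → ℕ → ℝ :=
    fun j m => ∑ i ∈ Finset.range (N + 1), (U j (i : ℤ) m) ^ 2 * w j i with hSdef
  have hwpos : ∀ j i, 0 < w j i := fun j i => Real.exp_pos _
  have hSnonneg : ∀ j m, 0 ≤ S j m := by
    intro j m
    apply Finset.sum_nonneg
    intro i _
    exact mul_nonneg (sq_nonneg _) (hwpos j i).le
  have hLS : ∀ m, L m = Δx * ∑ j, S j m := by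
    intro m
    rw [hL m, Finset.sum_comm]
  -- the per-component one-step estimate
  have key : ∀ j m, S j (m + 1) ≤ Real.exp (-ν * Δt) * S j m := by
    intro j m
    set c : ℝ := lam j * Δt / Δx with hcdef
    have hcpos : 0 < c := div_pos (mul_pos (hlam j) hΔt) hΔxpos
    have hc1 : c ≤ 1 := hCFL j
    have hmupos : 0 < mu j := (hmu j).1
    set a : ℝ := mu j * Δx with hadef
    have hapos : 0 < a := mul_pos hmupos hΔxpos
    set E : ℝ := Real.exp (-a) with hEdef
    have hEpos : 0 < E := Real.exp_pos _
    have hEP : E * Real.exp a = 1 := by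
      rw [hEdef, ← Real.exp_add]; simp
    -- convexity pointwise
    have hpt : ∀ i ∈ Finset.range (N + 1),
        (U j (i : ℤ) (m + 1)) ^ 2 * w j i ≤
        ((1 - c) * (U j (i : ℤ) m) ^ 2 + c * (U j ((i : ℤ) - 1) m) ^ 2) * w j i := by
      intro i hi
      have hiN : (i : ℤ) ≤ (N : ℤ) := by
        have := Finset.mem_range.mp hi
        omega
      have hsch := hscheme j i (Int.ofNat_nonneg i) hiN m
      have hsq : (U j (i : ℤ) (m + 1)) ^ 2 ≤
          (1 - c) * (U j (i : ℤ) m) ^ 2 + c * (U j ((i : ℤ) - 1) m) ^ 2 := by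
        rw [hsch, ← hcdef]
        nlinarith [mul_nonneg (mul_nonneg hcpos.le (sub_nonneg.mpr hc1))
          (sq_nonneg (U j (i : ℤ) m - U j ((i : ℤ) - 1) m))]
      exact mul_le_mul_of_nonneg_right hsq (hwpos j i).le
    have hstep1 : S j (m + 1) ≤ (1 - c) * S j m +
        c * ∑ i ∈ Finset.range (N + 1), (U j ((i : ℤ) - 1) m) ^ 2 * w j i := by
      calc S j (m + 1) ≤ ∑ i ∈ Finset.range (N + 1),
            ((1 - c) * (U j (i : ℤ) m) ^ 2 + c * (U j ((i : ℤ) - 1) m) ^ 2) * w j i :=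
            Finset.sum_le_sum hpt
        _ = (1 - c) * S j m +
            c * ∑ i ∈ Finset.range (N + 1), (U j ((i : ℤ) - 1) m) ^ 2 * w j i := by
            rw [hSdef]
            simp only [Finset.mul_sum, ← Finset.sum_add_distrib]
            apply Finset.sum_congr rfl
            intro i _
            ring
    -- the shifted-sum bound
    have hshift : ∑ i ∈ Finset.range (N + 1), (U j ((i : ℤ) - 1) m) ^ 2 * w j i ≤
        E * S j m := by
      have hsplit : ∑ i ∈ Finset.range (N + 1), (U j ((i : ℤ) - 1) m) ^ 2 * w j i =
          (∑ i ∈ Finset.range N, (U j (((i + 1 : ℕ) : ℤ) - 1) m) ^ 2 * w j (i + 1)) +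
          (U j (((0 : ℕ) : ℤ) - 1) m) ^ 2 * w j 0 :=
        Finset.sum_range_succ' (fun i => (U j ((i : ℤ) - 1) m) ^ 2 * w j i) N
      have hw0 : w j 0 = 1 := by simp [hwdef]
      have hwsucc : ∀ i : ℕ, w j (i + 1) = E * w j i := by
        intro i
        rw [hwdef, hEdef]
        simp only
        rw [← Real.exp_add]
        congr 1
        push_cast
        rw [hadef]
        ring
      have hSsplit : S j m = (∑ i ∈ Finset.range N, (U j (i : ℤ) m) ^ 2 * w j i) +
          (U j (N : ℤ) m) ^ 2 * w j N := Finset.sum_range_succ _ N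
      -- boundary term estimate
      have hk0 : (0 : ℝ) < kap j := (hkap j).1
      have hk1 : kap j < 1 := (hkap j).2
      have hkexp : kap j ≤ Real.exp (-(mu j)) := by
        have h1 : Real.exp (mu j) ≤ 1 / kap j := by
          calc Real.exp (mu j) ≤ Real.exp (Real.log (1 / kap j)) :=
              Real.exp_le_exp.mpr (hmu j).2
            _ = 1 / kap j := Real.exp_log (by positivity)
        have h2 : Real.exp (mu j) * kap j ≤ 1 := by
          rw [le_div_iff₀ hk0] at h1; linarith
        have hP : Real.exp (-(mu j)) * Real.exp (mu j) = 1 := by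
          rw [← Real.exp_add]; simp
        nlinarith [Real.exp_pos (mu j), Real.exp_pos (-(mu j))]
      have hEwN : E * w j N = Real.exp (-(mu j)) := by
        rw [hEdef, hwdef]
        simp only
        rw [← Real.exp_add]
        congr 1
        have : (N : ℝ) * Δx = 1 - Δx := by linarith [hNx]
        rw [hadef, this]
        ring
      have hbnd : (U j (((0 : ℕ) : ℤ) - 1) m) ^ 2 * w j 0 ≤
          E * ((U j (N : ℤ) m) ^ 2 * w j N) := by
        have h0 : (((0 : ℕ) : ℤ) - 1) = (-1 : ℤ) := by norm_num
        rw [h0, hbc j m, hw0, mul_one, ← mul_assoc, mul_comm E _, mul_assoc, hEwN]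
        have hk2 : (kap j) ^ 2 ≤ Real.exp (-(mu j)) := by
          nlinarith
        nlinarith [sq_nonneg (U j (N : ℤ) m), sq_nonneg (kap j * U j (N : ℤ) m),
          mul_le_mul_of_nonneg_right hk2 (sq_nonneg (U j (N : ℤ) m))]
      calc ∑ i ∈ Finset.range (N + 1), (U j ((i : ℤ) - 1) m) ^ 2 * w j i
          = (∑ i ∈ Finset.range N, (U j (((i + 1 : ℕ) : ℤ) - 1) m) ^ 2 * w j (i + 1)) +
            (U j (((0 : ℕ) : ℤ) - 1) m) ^ 2 * w j 0 := hsplit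
        _ = (E * ∑ i ∈ Finset.range N, (U j (i : ℤ) m) ^ 2 * w j i) +
            (U j (((0 : ℕ) : ℤ) - 1) m) ^ 2 * w j 0 := by
            congr 1
            rw [Finset.mul_sum]
            apply Finset.sum_congr rfl
            intro i _
            rw [hwsucc i]
            have : (((i + 1 : ℕ) : ℤ) - 1) = (i : ℤ) := by push_cast; ring
            rw [this]
            ring
        _ ≤ (E * ∑ i ∈ Finset.range N, (U j (i : ℤ) m) ^ 2 * w j i) +
            E * ((U j (N : ℤ) m) ^ 2 * w j N) := by linarith [hbnd]
        _ = E * S j m := by rw [hSsplit]; ring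
    -- combine and compare coefficients
    have hcomb : S j (m + 1) ≤ (1 - c * (1 - E)) * S j m := by
      calc S j (m + 1) ≤ (1 - c) * S j m +
            c * ∑ i ∈ Finset.range (N + 1), (U j ((i : ℤ) - 1) m) ^ 2 * w j i := hstep1
        _ ≤ (1 - c) * S j m + c * (E * S j m) :=
            add_le_add (le_refl _) (mul_le_mul_of_nonneg_left hshift hcpos.le)
        _ = (1 - c * (1 - E)) * S j m := by ring
    have hνle : ν ≤ lam j * mu j * E / 2 := by
      have h : ν ≤ lam j * mu j * Real.exp (-(mu j) * Δx) / 2 := by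
        rw [hν]
        exact Finset.inf'_le _ (Finset.mem_univ j)
      have heq : Real.exp (-(mu j) * Δx) = E := by
        rw [hEdef]; congr 1; rw [hadef]; ring
      rwa [heq] at h
    have hcoef : 1 - c * (1 - E) ≤ Real.exp (-ν * Δt) := by
      have h1 : a * E / 2 ≤ 1 - E := by
        have hx : a + 1 ≤ Real.exp a := Real.add_one_le_exp a
        have h5 : E * (a + 1) ≤ E * Real.exp a :=
          mul_le_mul_of_nonneg_left hx hEpos.le
        rw [hEP] at h5
        have haE : 0 ≤ a * E := (mul_pos hapos hEpos).le
        linarith [h5, haE]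
      have h1' : mu j * Δx * E / 2 ≤ 1 - E := by rw [← hadef]; exact h1
      have hlt : (0:ℝ) ≤ lam j * Δt := (mul_pos (hlam j) hΔt).le
      have h2 : lam j * mu j * E / 2 * Δt ≤ c * (1 - E) := by
        rw [hcdef, show lam j * Δt / Δx * (1 - E) = lam j * Δt * (1 - E) / Δx from by
          ring, le_div_iff₀ hΔxpos]
        calc lam j * mu j * E / 2 * Δt * Δx
            = lam j * Δt * (mu j * Δx * E / 2) := by ring
          _ ≤ lam j * Δt * (1 - E) := mul_le_mul_of_nonneg_left h1' hlt
      have h3 : ν * Δt ≤ c * (1 - E) := by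
        have := mul_le_mul_of_nonneg_right hνle hΔt.le
        linarith
      have h4 : -ν * Δt + 1 ≤ Real.exp (-ν * Δt) := Real.add_one_le_exp _
      linarith
    calc S j (m + 1) ≤ (1 - c * (1 - E)) * S j m := hcomb
      _ ≤ Real.exp (-ν * Δt) * S j m :=
        mul_le_mul_of_nonneg_right hcoef (hSnonneg j m)
  -- one time step for L
  have step : ∀ m, L (m + 1) ≤ Real.exp (-ν * Δt) * L m := by
    intro m
    rw [hLS (m + 1), hLS m]
    have hsum : ∑ j, S j (m + 1) ≤ Real.exp (-ν * Δt) * ∑ j, S j m := by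
      rw [Finset.mul_sum]
      exact Finset.sum_le_sum (fun j _ => key j m)
    calc Δx * ∑ j, S j (m + 1)
        ≤ Δx * (Real.exp (-ν * Δt) * ∑ j, S j m) :=
          mul_le_mul_of_nonneg_left hsum hΔxpos.le
      _ = Real.exp (-ν * Δt) * (Δx * ∑ j, S j m) := by ring
  -- induction
  intro m
  induction m with
  | zero => simp
  | succ m ih =>
    calc L (m + 1) ≤ Real.exp (-ν * Δt) * L m := step m
      _ ≤ Real.exp (-ν * Δt) * (Real.exp (-ν * ((m : ℝ) * Δt)) * L 0) :=
        mul_le_mul_of_nonneg_left ih (Real.exp_pos _).le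
      _ = Real.exp (-ν * (((m : ℕ) + 1 : ℝ) * Δt)) * L 0 := by
        rw [← mul_assoc, ← Real.exp_add]
        congr 2
        ring
      _ = Real.exp (-ν * (((m + 1 : ℕ) : ℝ) * Δt)) * L 0 := by
        push_cast
        ring_nf
end
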